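/- arXiv:1908.05248 — 2 statements merged into one kernel-verified Lean document; each statement's English description precedes it below -/
import Mathlib

section
/- Let q ∈ k^× with q ≠ ±1 and let m ≥ 3. If the generalized Taft algebra T_n(λ,m,0) acts on O_q(M_2(k)) with x acting linearly and nonzero, and with g acting as an element of the group H ⋊ ⟨τ⟩ of graded automorphisms, then g must act as an element of H, i.e. diagonally on the basis (A, B, C, D) of the degree-one part of O_q(M_2(k)). -/
/-- The images of the generators `Y_{ij}` in the free algebra. -/
def YY (k : Type) [Field k] (N : ℕ) (i j : Fin N) : FreeAlgebra k (Fin N × Fin N) :=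
  FreeAlgebra.ι k (i, j)

/-- The defining relations of the single parameter quantum matrix algebra
`O_q(M_N(k))`. -/
inductive QMatRel (k : Type) [Field k] (q : k) (N : ℕ) :
    FreeAlgebra k (Fin N × Fin N) → FreeAlgebra k (Fin N × Fin N) → Prop
  | row (i : Fin N) {j m : Fin N} (h : j < m) :
      QMatRel k q N (YY k N i j * YY k N i m) (q • (YY k N i m * YY k N i j))
  | col (j : Fin N) {i l : Fin N} (h : i < l) :
      QMatRel k q N (YY k N i j * YY k N l j) (q • (YY k N l j * YY k N i j))
  | anti {i l j m : Fin N} (h1 : i < l) (h2 : m < j) :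
      QMatRel k q N (YY k N i j * YY k N l m) (YY k N l m * YY k N i j)
  | diag {i l j m : Fin N} (h1 : i < l) (h2 : j < m) :
      QMatRel k q N (YY k N i j * YY k N l m)
        (YY k N l m * YY k N i j + (q - q⁻¹) • (YY k N i m * YY k N l j))

/-- The single parameter quantum matrix algebra `O_q(M_N(k))`. -/
abbrev QMat (k : Type) [Field k] (q : k) (N : ℕ) : Type := RingQuot (QMatRel k q N)

/-- The generators `Y_{ij}` of `O_q(M_N(k))`. -/
noncomputable def QMat.Y (k : Type) [Field k] (q : k) (N : ℕ) (i j : Fin N) : QMat k q N :=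
  RingQuot.mkAlgHom k (QMatRel k q N) (YY k N i j)

/-- The degree-one part of `O_q(M_N(k))`, i.e. the span of the generators `Y_{ij}`. -/
noncomputable def QMat.V (k : Type) [Field k] (q : k) (N : ℕ) : Submodule k (QMat k q N) :=
  Submodule.span k (Set.range fun ij : Fin N × Fin N => QMat.Y k q N ij.1 ij.2)

/-- A `k`-algebra automorphism of `O_q(M_N(k))` acts as an element of the group
`H ⋊ ⟨τ⟩`, where `H = (kˣ)^{2N-1}` consists of the diagonal automorphisms
`Y_{ij} ↦ α_{ij} Y_{ij}` for a rank-one matrix `(α_{ij}) = (a_i b_j)` with no zero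
entries, and `τ` is the transposition automorphism `Y_{ij} ↦ Y_{ji}`. -/
def ActsAsHTau (k : Type) [Field k] (q : k) (N : ℕ)
    (g : QMat k q N ≃ₐ[k] QMat k q N) : Prop :=
  ∃ a b : Fin N → k, (∀ i, a i ≠ 0) ∧ (∀ j, b j ≠ 0) ∧
    ((∀ i j, g (QMat.Y k q N i j) = (a i * b j) • QMat.Y k q N i j) ∨
     (∀ i j, g (QMat.Y k q N i j) = (a i * b j) • QMat.Y k q N j i))
/-- Action data for the generalized Taft algebra `T_n(λ, m, γ)` on a `k`-algebra `A`:
the grouplike generator `g` acts as a `k`-algebra automorphism with `g^n = 1`, the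
`(g,1)`-skew-primitive generator `x` acts as a `(g,1)`-skew derivation, and the defining
relations `g x = λ x g` and `x^m = γ(g^m - 1)` hold.  Giving such data is the same as
making `A` a left `T_n(λ, m, γ)`-module algebra. -/
structure TaftAction (k : Type) [Field k] (n m : ℕ) (lam gam : k)
    (A : Type) [Ring A] [Algebra k A] where
  g : A ≃ₐ[k] A
  x : Module.End k A
  g_pow : g ^ n = 1
  comm : ∀ a : A, g (x a) = lam • x (g a)
  skew : ∀ a b : A, x (a * b) = g a * x b + x a * b
  x_pow : (x ^ m : Module.End k A) =
      gam • ((g ^ m : A ≃ₐ[k] A).toLinearMap - LinearMap.id)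

/-- Inner faithfulness of a `T_n(λ,m,γ)`-action: no nonzero Hopf ideal annihilates `A`;
concretely, `x` acts by a nonzero operator and `g` acts by an automorphism of order
exactly `n`. -/
def TaftAction.InnerFaithful {k : Type} [Field k] {n m : ℕ} {lam gam : k}
    {A : Type} [Ring A] [Algebra k A] (T : TaftAction k n m lam gam A) : Prop :=
  T.x ≠ 0 ∧ orderOf T.g = n


namespace Stmt10

variable {k : Type} [Field k]

abbrev W3 (k : Type) [Field k] : Type := (ℕ × ℕ × ℕ) →₀ k

noncomputable def sh (v : ℕ × ℕ × ℕ → W3 k) : Module.End k (W3 k) :=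
  Finsupp.lsum k fun p => LinearMap.toSpanSingleton k (W3 k) (v p)

lemma sh_single (v : ℕ × ℕ × ℕ → W3 k) (p : ℕ × ℕ × ℕ) (t : k) :
    sh v (Finsupp.single p t) = t • v p := by
  simp [sh, LinearMap.toSpanSingleton_apply]

noncomputable def shA : Module.End k (W3 k) :=
  sh fun p => Finsupp.single (p.1 + 1, p.2.1, p.2.2) 1

noncomputable def shB (q : k) : Module.End k (W3 k) :=
  sh fun p => Finsupp.single (p.1, p.2.1 + 1, p.2.2) (q⁻¹ ^ p.1)

noncomputable def shC (q : k) : Module.End k (W3 k) :=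
  sh fun p => Finsupp.single (p.1, p.2.1, p.2.2 + 1) (q⁻¹ ^ p.2.1)

lemma shA_single (p : ℕ × ℕ × ℕ) (t : k) :
    shA (Finsupp.single p t) = Finsupp.single (p.1 + 1, p.2.1, p.2.2) t := by
  simp [shA, sh_single, Finsupp.smul_single]

lemma shB_single (q : k) (p : ℕ × ℕ × ℕ) (t : k) :
    shB q (Finsupp.single p t) = Finsupp.single (p.1, p.2.1 + 1, p.2.2) (t * q⁻¹ ^ p.1) := by
  simp [shB, sh_single, Finsupp.smul_single, smul_eq_mul]

lemma shC_single (q : k) (p : ℕ × ℕ × ℕ) (t : k) :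
    shC q (Finsupp.single p t) = Finsupp.single (p.1, p.2.1, p.2.2 + 1) (t * q⁻¹ ^ p.2.1) := by
  simp [shC, sh_single, Finsupp.smul_single, smul_eq_mul]

lemma shA_shB (q : k) (hq0 : q ≠ 0) : shA * shB q = q • (shB q * shA) := by
  apply Finsupp.lhom_ext
  intro p t
  simp only [Module.End.mul_apply, LinearMap.smul_apply, shA_single, shB_single]
  rw [Finsupp.smul_single]
  congr 1
  field_simp
  rw [smul_eq_mul, pow_succ, one_div]
  field_simp

lemma shB_shC (q : k) (hq0 : q ≠ 0) : shB q * shC q = q • (shC q * shB q) := by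
  apply Finsupp.lhom_ext
  intro p t
  simp only [Module.End.mul_apply, LinearMap.smul_apply, shB_single, shC_single]
  rw [Finsupp.smul_single]
  congr 1
  field_simp
  rw [smul_eq_mul, pow_succ, one_div]
  field_simp

lemma shA_shC (q : k) : shA * shC q = shC q * shA := by
  apply Finsupp.lhom_ext
  intro p t
  simp only [Module.End.mul_apply, shA_single, shC_single]


variable (q : k)

noncomputable def f1 : Fin 2 × Fin 2 → Module.End k (W3 k) :=
  fun ij => !![shA, 0; shB q, shC q] ij.1 ij.2

noncomputable def f2 : Fin 2 × Fin 2 → Module.End k (W3 k) :=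
  fun ij => !![shA, shB q; 0, shC q] ij.1 ij.2

noncomputable def F1 : FreeAlgebra k (Fin 2 × Fin 2) →ₐ[k] Module.End k (W3 k) :=
  FreeAlgebra.lift k (f1 q)

noncomputable def F2 : FreeAlgebra k (Fin 2 × Fin 2) →ₐ[k] Module.End k (W3 k) :=
  FreeAlgebra.lift k (f2 q)

lemma F1_YY (i j : Fin 2) : F1 q (YY k 2 i j) = f1 q (i, j) := by
  simp [F1, YY, FreeAlgebra.lift_ι_apply]

lemma F2_YY (i j : Fin 2) : F2 q (YY k 2 i j) = f2 q (i, j) := by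
  simp [F2, YY, FreeAlgebra.lift_ι_apply]

lemma F1_rel (hq0 : q ≠ 0) : ∀ ⦃x y : FreeAlgebra k (Fin 2 × Fin 2)⦄,
    QMatRel k q 2 x y → F1 q x = F1 q y := by
  intro x y hxy
  induction hxy with
  | @row i j m h =>
    fin_cases i <;> fin_cases j <;> fin_cases m <;> simp_all [map_mul, map_smul, F1_YY, f1,
      shB_shC q hq0]
  | @col j i l h =>
    fin_cases j <;> fin_cases i <;> fin_cases l <;> simp_all [map_mul, map_smul, F1_YY, f1,
      shA_shB q hq0]
  | @anti i l j m h1 h2 =>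
    fin_cases i <;> fin_cases l <;> fin_cases j <;> fin_cases m <;> simp_all [map_mul, F1_YY, f1]
  | @diag i l j m h1 h2 =>
    fin_cases i <;> fin_cases l <;> fin_cases j <;> fin_cases m <;> simp_all [map_mul, map_add,
      map_smul, F1_YY, f1, shA_shC q]

lemma F2_rel (hq0 : q ≠ 0) : ∀ ⦃x y : FreeAlgebra k (Fin 2 × Fin 2)⦄,
    QMatRel k q 2 x y → F2 q x = F2 q y := by
  intro x y hxy
  induction hxy with
  | @row i j m h =>
    fin_cases i <;> fin_cases j <;> fin_cases m <;> simp_all [map_mul, map_smul, F2_YY, f2,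
      shA_shB q hq0]
  | @col j i l h =>
    fin_cases j <;> fin_cases i <;> fin_cases l <;> simp_all [map_mul, map_smul, F2_YY, f2,
      shB_shC q hq0]
  | @anti i l j m h1 h2 =>
    fin_cases i <;> fin_cases l <;> fin_cases j <;> fin_cases m <;> simp_all [map_mul, F2_YY, f2]
  | @diag i l j m h1 h2 =>
    fin_cases i <;> fin_cases l <;> fin_cases j <;> fin_cases m <;> simp_all [map_mul, map_add,
      map_smul, F2_YY, f2, shA_shC q]


noncomputable def rho1 (hq0 : q ≠ 0) : QMat k q 2 →ₐ[k] Module.End k (W3 k) :=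
  RingQuot.liftAlgHom k ⟨F1 q, F1_rel q hq0⟩

noncomputable def rho2 (hq0 : q ≠ 0) : QMat k q 2 →ₐ[k] Module.End k (W3 k) :=
  RingQuot.liftAlgHom k ⟨F2 q, F2_rel q hq0⟩

variable (hq0 : q ≠ 0)

lemma rho1_Y00 : rho1 q hq0 (QMat.Y k q 2 0 0) = shA := by
  simp [rho1, QMat.Y, RingQuot.liftAlgHom_mkAlgHom_apply, F1_YY, f1]

lemma rho1_Y01 : rho1 q hq0 (QMat.Y k q 2 0 1) = 0 := by
  simp [rho1, QMat.Y, RingQuot.liftAlgHom_mkAlgHom_apply, F1_YY, f1]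

lemma rho1_Y10 : rho1 q hq0 (QMat.Y k q 2 1 0) = shB q := by
  simp [rho1, QMat.Y, RingQuot.liftAlgHom_mkAlgHom_apply, F1_YY, f1]

lemma rho1_Y11 : rho1 q hq0 (QMat.Y k q 2 1 1) = shC q := by
  simp [rho1, QMat.Y, RingQuot.liftAlgHom_mkAlgHom_apply, F1_YY, f1]

lemma rho2_Y00 : rho2 q hq0 (QMat.Y k q 2 0 0) = shA := by
  simp [rho2, QMat.Y, RingQuot.liftAlgHom_mkAlgHom_apply, F2_YY, f2]

lemma rho2_Y01 : rho2 q hq0 (QMat.Y k q 2 0 1) = shB q := by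
  simp [rho2, QMat.Y, RingQuot.liftAlgHom_mkAlgHom_apply, F2_YY, f2]

lemma rho2_Y10 : rho2 q hq0 (QMat.Y k q 2 1 0) = 0 := by
  simp [rho2, QMat.Y, RingQuot.liftAlgHom_mkAlgHom_apply, F2_YY, f2]

lemma rho2_Y11 : rho2 q hq0 (QMat.Y k q 2 1 1) = shC q := by
  simp [rho2, QMat.Y, RingQuot.liftAlgHom_mkAlgHom_apply, F2_YY, f2]

noncomputable def vac : W3 k := Finsupp.single (0, 0, 0) 1

-- test extraction machinery
example (c d : k) (h : c • QMat.Y k q 2 0 0 + d • QMat.Y k q 2 1 0 = 0) : c = 0 := by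
  have E := congrArg (fun u => rho1 q hq0 u vac) h
  simp only [map_add, map_smul, map_zero, LinearMap.add_apply, LinearMap.smul_apply,
    LinearMap.zero_apply, rho1_Y00, rho1_Y10, vac, shA_single, shB_single,
    Finsupp.smul_single, smul_eq_mul, mul_one, pow_zero] at E
  have p := DFunLike.congr_fun E ((1, 0, 0) : ℕ × ℕ × ℕ)
  simp only [Finsupp.add_apply, Finsupp.single_apply, Finsupp.coe_zero, Pi.zero_apply] at p
  norm_num [Prod.ext_iff] at p
  exact p


end Stmt10

open Stmt10 in
set_option maxHeartbeats 2000000 in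
lemma tau_zero {k : Type} [Field k] {q lam : k} (hq0 : q ≠ 0) (hq2 : q ^ 2 ≠ 1)
    (hl1 : lam ≠ 1) (hl2 : lam ^ 2 ≠ 1)
    (g : QMat k q 2 ≃ₐ[k] QMat k q 2) (x : Module.End k (QMat k q 2))
    (hcomm : ∀ u, g (x u) = lam • x (g u))
    (hskew : ∀ u v, x (u * v) = g u * x v + x u * v)
    (a b : Fin 2 → k) (ha : ∀ i, a i ≠ 0) (hb : ∀ j, b j ≠ 0)
    (hgt : ∀ i j, g (QMat.Y k q 2 i j) = (a i * b j) • QMat.Y k q 2 j i)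
    (hx : ∀ i j, x (QMat.Y k q 2 i j) ∈ QMat.V k q 2) :
    ∀ i j, x (QMat.Y k q 2 i j) = 0 := by
  have hmem : ∀ i j : Fin 2, ∃ c : Fin 2 × Fin 2 → k,
      ∑ p : Fin 2 × Fin 2, c p • QMat.Y k q 2 p.1 p.2 = x (QMat.Y k q 2 i j) :=
    fun i j => (Submodule.mem_span_range_iff_exists_fun k).1 (hx i j)
  choose c hc using hmem
  have hc' : ∀ i j, x (QMat.Y k q 2 i j) =
      c i j (0,0) • QMat.Y k q 2 0 0 + c i j (0,1) • QMat.Y k q 2 0 1 +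
      c i j (1,0) • QMat.Y k q 2 1 0 + c i j (1,1) • QMat.Y k q 2 1 1 := by
    intro i j
    rw [← hc i j, Fintype.sum_prod_type]
    simp only [Fin.sum_univ_two]
    abel
  -- relations
  have rAB : QMat.Y k q 2 0 0 * QMat.Y k q 2 0 1 = q • (QMat.Y k q 2 0 1 * QMat.Y k q 2 0 0) := by
    simpa only [QMat.Y, map_mul, map_smul] using
      RingQuot.mkAlgHom_rel k (QMatRel.row (k := k) (q := q) (N := 2) 0 (j := 0) (m := 1)
        (by decide))
  -- skew equation for AB
  have EAB : g (QMat.Y k q 2 0 0) * x (QMat.Y k q 2 0 1) + x (QMat.Y k q 2 0 0) * QMat.Y k q 2 0 1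
      = q • (g (QMat.Y k q 2 0 1) * x (QMat.Y k q 2 0 0) +
          x (QMat.Y k q 2 0 1) * QMat.Y k q 2 0 0) := by
    rw [← hskew, ← hskew, ← map_smul, ← rAB]
  rw [hgt 0 0, hgt 0 1] at EAB
  rw [hc' 0 0, hc' 0 1] at EAB
  have T1 := congrArg (fun u => rho1 q hq0 u vac) EAB
  simp only [map_add, map_smul, map_mul, map_zero, LinearMap.add_apply, LinearMap.smul_apply,
    Module.End.mul_apply, LinearMap.zero_apply, rho1_Y00, rho1_Y01, rho1_Y10, rho1_Y11,
    vac, shA_single, shB_single, shC_single, Finsupp.smul_single, smul_eq_mul, smul_add,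
    smul_smul, mul_one, one_mul, pow_zero, pow_one, smul_zero, mul_zero, zero_mul,
    add_zero, zero_add, smul_mul_assoc] at T1
  have p1 := DFunLike.congr_fun T1 ((2, 0, 0) : ℕ × ℕ × ℕ)
  have p2 := DFunLike.congr_fun T1 ((1, 0, 1) : ℕ × ℕ × ℕ)
  have p3 := DFunLike.congr_fun T1 ((0, 2, 0) : ℕ × ℕ × ℕ)
  have p4 := DFunLike.congr_fun T1 ((0, 1, 1) : ℕ × ℕ × ℕ)
  simp only [Finsupp.add_apply, Finsupp.single_apply, Finsupp.coe_zero, Pi.zero_apply] at p1 p2 p3 p4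
  norm_num [Prod.ext_iff] at p1 p2 p3 p4

  have T2 := congrArg (fun u => rho2 q hq0 u vac) EAB
  simp only [map_add, map_smul, map_mul, map_zero, LinearMap.add_apply, LinearMap.smul_apply,
    Module.End.mul_apply, LinearMap.zero_apply, rho2_Y00, rho2_Y01, rho2_Y10, rho2_Y11,
    vac, shA_single, shB_single, shC_single, Finsupp.smul_single, smul_eq_mul, smul_add,
    smul_smul, mul_one, one_mul, pow_zero, pow_one, smul_zero, mul_zero, zero_mul,
    add_zero, zero_add, smul_mul_assoc] at T2
  have p5 := DFunLike.congr_fun T2 ((0, 2, 0) : ℕ × ℕ × ℕ)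
  simp only [Finsupp.add_apply, Finsupp.single_apply, Finsupp.coe_zero, Pi.zero_apply] at p5
  norm_num [Prod.ext_iff] at p5
  -- BC relation
  have rBC : QMat.Y k q 2 0 1 * QMat.Y k q 2 1 0 = QMat.Y k q 2 1 0 * QMat.Y k q 2 0 1 := by
    simpa only [QMat.Y, map_mul] using
      RingQuot.mkAlgHom_rel k (QMatRel.anti (k := k) (q := q) (N := 2) (i := 0) (l := 1)
        (j := 1) (m := 0) (by decide) (by decide))
  have EBC : g (QMat.Y k q 2 0 1) * x (QMat.Y k q 2 1 0) + x (QMat.Y k q 2 0 1) * QMat.Y k q 2 1 0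
      = g (QMat.Y k q 2 1 0) * x (QMat.Y k q 2 0 1) +
          x (QMat.Y k q 2 1 0) * QMat.Y k q 2 0 1 := by
    rw [← hskew, ← hskew, rBC]
  rw [hgt 0 1, hgt 1 0, hc' 0 1, hc' 1 0] at EBC
  have T3 := congrArg (fun u => rho1 q hq0 u vac) EBC
  have T4 := congrArg (fun u => rho2 q hq0 u vac) EBC
  simp only [map_add, map_smul, map_mul, map_zero, LinearMap.add_apply, LinearMap.smul_apply,
    Module.End.mul_apply, LinearMap.zero_apply, rho1_Y00, rho1_Y01, rho1_Y10, rho1_Y11,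
    vac, shA_single, shB_single, shC_single, Finsupp.smul_single, smul_eq_mul, smul_add,
    smul_smul, mul_one, one_mul, pow_zero, pow_one, smul_zero, mul_zero, zero_mul,
    add_zero, zero_add, smul_mul_assoc] at T3
  simp only [map_add, map_smul, map_mul, map_zero, LinearMap.add_apply, LinearMap.smul_apply,
    Module.End.mul_apply, LinearMap.zero_apply, rho2_Y00, rho2_Y01, rho2_Y10, rho2_Y11,
    vac, shA_single, shB_single, shC_single, Finsupp.smul_single, smul_eq_mul, smul_add,
    smul_smul, mul_one, one_mul, pow_zero, pow_one, smul_zero, mul_zero, zero_mul,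
    add_zero, zero_add, smul_mul_assoc] at T4
  have p6 := DFunLike.congr_fun T3 ((1, 1, 0) : ℕ × ℕ × ℕ)
  have p7 := DFunLike.congr_fun T3 ((0, 1, 1) : ℕ × ℕ × ℕ)
  have p8 := DFunLike.congr_fun T4 ((1, 1, 0) : ℕ × ℕ × ℕ)
  have p9 := DFunLike.congr_fun T4 ((0, 1, 1) : ℕ × ℕ × ℕ)
  simp only [Finsupp.add_apply, Finsupp.single_apply, Finsupp.coe_zero, Pi.zero_apply]
    at p6 p7 p8 p9
  norm_num [Prod.ext_iff] at p6 p7 p8 p9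
  -- CD relation
  have rCD : QMat.Y k q 2 1 0 * QMat.Y k q 2 1 1 = q • (QMat.Y k q 2 1 1 * QMat.Y k q 2 1 0) := by
    simpa only [QMat.Y, map_mul, map_smul] using
      RingQuot.mkAlgHom_rel k (QMatRel.row (k := k) (q := q) (N := 2) 1 (j := 0) (m := 1)
        (by decide))
  have ECD : g (QMat.Y k q 2 1 0) * x (QMat.Y k q 2 1 1) + x (QMat.Y k q 2 1 0) * QMat.Y k q 2 1 1
      = q • (g (QMat.Y k q 2 1 1) * x (QMat.Y k q 2 1 0) +
          x (QMat.Y k q 2 1 1) * QMat.Y k q 2 1 0) := by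
    rw [← hskew, ← hskew, ← map_smul, ← rCD]
  rw [hgt 1 0, hgt 1 1, hc' 1 0, hc' 1 1] at ECD
  have T5 := congrArg (fun u => rho1 q hq0 u vac) ECD
  have T6 := congrArg (fun u => rho2 q hq0 u vac) ECD
  simp only [map_add, map_smul, map_mul, map_zero, LinearMap.add_apply, LinearMap.smul_apply,
    Module.End.mul_apply, LinearMap.zero_apply, rho1_Y00, rho1_Y01, rho1_Y10, rho1_Y11,
    vac, shA_single, shB_single, shC_single, Finsupp.smul_single, smul_eq_mul, smul_add,
    smul_smul, mul_one, one_mul, pow_zero, pow_one, smul_zero, mul_zero, zero_mul,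
    add_zero, zero_add, smul_mul_assoc] at T5
  simp only [map_add, map_smul, map_mul, map_zero, LinearMap.add_apply, LinearMap.smul_apply,
    Module.End.mul_apply, LinearMap.zero_apply, rho2_Y00, rho2_Y01, rho2_Y10, rho2_Y11,
    vac, shA_single, shB_single, shC_single, Finsupp.smul_single, smul_eq_mul, smul_add,
    smul_smul, mul_one, one_mul, pow_zero, pow_one, smul_zero, mul_zero, zero_mul,
    add_zero, zero_add, smul_mul_assoc] at T6
  have p10 := DFunLike.congr_fun T5 ((1, 1, 0) : ℕ × ℕ × ℕ)
  have p11 := DFunLike.congr_fun T5 ((0, 2, 0) : ℕ × ℕ × ℕ)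
  have p12 := DFunLike.congr_fun T5 ((1, 0, 1) : ℕ × ℕ × ℕ)
  have p13 := DFunLike.congr_fun T5 ((0, 0, 2) : ℕ × ℕ × ℕ)
  have p14 := DFunLike.congr_fun T6 ((0, 2, 0) : ℕ × ℕ × ℕ)
  simp only [Finsupp.add_apply, Finsupp.single_apply, Finsupp.coe_zero, Pi.zero_apply]
    at p10 p11 p12 p13 p14
  norm_num [Prod.ext_iff] at p10 p11 p12 p13 p14
  -- eigen equations
  have EgA := hcomm (QMat.Y k q 2 0 0)
  have EgB := hcomm (QMat.Y k q 2 0 1)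
  have EgC := hcomm (QMat.Y k q 2 1 0)
  have EgD := hcomm (QMat.Y k q 2 1 1)
  simp only [hc', map_add, map_smul, hgt, smul_smul, smul_add] at EgA EgB EgC EgD
  have T7 := congrArg (fun u => rho1 q hq0 u vac) EgA
  have T8 := congrArg (fun u => rho1 q hq0 u vac) EgB
  have T9 := congrArg (fun u => rho2 q hq0 u vac) EgB
  have T10 := congrArg (fun u => rho1 q hq0 u vac) EgC
  have T11 := congrArg (fun u => rho2 q hq0 u vac) EgC
  have T12 := congrArg (fun u => rho1 q hq0 u vac) EgD
  simp only [map_add, map_smul, map_mul, map_zero, LinearMap.add_apply, LinearMap.smul_apply,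
    Module.End.mul_apply, LinearMap.zero_apply, rho1_Y00, rho1_Y01, rho1_Y10, rho1_Y11,
    vac, shA_single, shB_single, shC_single, Finsupp.smul_single, smul_eq_mul, smul_add,
    smul_smul, mul_one, one_mul, pow_zero, pow_one, smul_zero, mul_zero, zero_mul,
    add_zero, zero_add, smul_mul_assoc] at T7 T8 T10 T12
  simp only [map_add, map_smul, map_mul, map_zero, LinearMap.add_apply, LinearMap.smul_apply,
    Module.End.mul_apply, LinearMap.zero_apply, rho2_Y00, rho2_Y01, rho2_Y10, rho2_Y11,
    vac, shA_single, shB_single, shC_single, Finsupp.smul_single, smul_eq_mul, smul_add,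
    smul_smul, mul_one, one_mul, pow_zero, pow_one, smul_zero, mul_zero, zero_mul,
    add_zero, zero_add, smul_mul_assoc] at T9 T11
  have p15 := DFunLike.congr_fun T7 ((1, 0, 0) : ℕ × ℕ × ℕ)
  have p16 := DFunLike.congr_fun T8 ((0, 1, 0) : ℕ × ℕ × ℕ)
  have p17 := DFunLike.congr_fun T9 ((0, 1, 0) : ℕ × ℕ × ℕ)
  have p18 := DFunLike.congr_fun T10 ((0, 1, 0) : ℕ × ℕ × ℕ)
  have p19 := DFunLike.congr_fun T11 ((0, 1, 0) : ℕ × ℕ × ℕ)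
  have p20 := DFunLike.congr_fun T12 ((0, 0, 1) : ℕ × ℕ × ℕ)
  simp only [Finsupp.add_apply, Finsupp.single_apply, Finsupp.coe_zero, Pi.zero_apply]
    at p15 p16 p17 p18 p19 p20
  norm_num [Prod.ext_iff] at p15 p16 p17 p18 p19 p20

  -- nonzero scalars
  have hA : a 0 * b 0 ≠ 0 := mul_ne_zero (ha 0) (hb 0)
  have hB : a 0 * b 1 ≠ 0 := mul_ne_zero (ha 0) (hb 1)
  have hC : a 1 * b 0 ≠ 0 := mul_ne_zero (ha 1) (hb 0)
  have hD : a 1 * b 1 ≠ 0 := mul_ne_zero (ha 1) (hb 1)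
  have hl1' : (1 : k) - lam ≠ 0 := sub_ne_zero_of_ne (Ne.symm hl1)
  have hl2' : (1 : k) - lam * lam ≠ 0 := by
    intro h; apply hl2; rw [sq]; linear_combination -h
  have hq2' : (1 : k) - q * q ≠ 0 := by
    intro h; apply hq2; rw [sq]; linear_combination -h
  have hq' : q * q⁻¹ = 1 := mul_inv_cancel₀ hq0
  -- clear inverses in p6-p9
  have p6' : a 0 * b 1 * c 1 0 (0, 0) + q * c 0 1 (0, 0) = 0 := by
    linear_combination q * p6 - a 0 * b 1 * c 1 0 (0, 0) * hq'
  have p7' : q * (a 0 * b 1) * c 1 0 (1, 1) + c 0 1 (1, 1) = 0 := by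
    linear_combination q * p7 - c 0 1 (1, 1) * hq'
  have p8' : a 1 * b 0 * c 0 1 (0, 0) + q * c 1 0 (0, 0) = 0 := by
    linear_combination -q * p8 - a 1 * b 0 * c 0 1 (0, 0) * hq'
  have p9' : q * (a 1 * b 0) * c 0 1 (1, 1) + c 1 0 (1, 1) = 0 := by
    linear_combination -q * p9 - c 1 0 (1, 1) * hq'
  -- vanishing of all 16 coefficients
  have hA00 : c 0 0 (0, 0) = 0 := by
    have h : ((1 - lam) * (a 0 * b 0)) * c 0 0 (0, 0) = 0 := by linear_combination p15
    exact (mul_eq_zero.1 h).resolve_left (mul_ne_zero hl1' hA)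
  have hA01 : c 0 0 (0, 1) = 0 := p5
  have hA10 : c 0 0 (1, 0) = 0 := by
    rcases p3 with (h | h | h) | h
    · exact absurd h hq0
    · exact absurd h (ha 0)
    · exact absurd h (hb 1)
    · exact h
  have hA11 : c 0 0 (1, 1) = 0 := by
    rcases p4 with (h | h | h) | h
    · exact absurd h hq0
    · exact absurd h (ha 0)
    · exact absurd h (hb 1)
    · exact h
  have hD00 : c 1 1 (0, 0) = 0 := p10.resolve_left hq0
  have hD10 : c 1 1 (1, 0) = 0 := p11.resolve_left hq0
  have hD01 : c 1 1 (0, 1) = 0 := by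
    rcases p14 with (h | h) | h
    · exact absurd h (ha 1)
    · exact absurd h (hb 0)
    · exact h
  have hD11 : c 1 1 (1, 1) = 0 := by
    have h : ((1 - lam) * (a 1 * b 1)) * c 1 1 (1, 1) = 0 := by linear_combination p20
    exact (mul_eq_zero.1 h).resolve_left (mul_ne_zero hl1' hD)
  have hB01 : c 0 1 (0, 1) = 0 := by
    have e1 : c 0 1 (0, 1) = lam * c 1 0 (1, 0) := by
      have h : (a 0 * b 1) * (c 0 1 (0, 1) - lam * c 1 0 (1, 0)) = 0 := by
        linear_combination p16
      have h2 := (mul_eq_zero.1 h).resolve_left hB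
      linear_combination h2
    have e2 : c 1 0 (1, 0) = lam * c 0 1 (0, 1) := by
      have h : (a 1 * b 0) * (c 1 0 (1, 0) - lam * c 0 1 (0, 1)) = 0 := by
        linear_combination p19
      have h2 := (mul_eq_zero.1 h).resolve_left hC
      linear_combination h2
    have h : (1 - lam * lam) * c 0 1 (0, 1) = 0 := by
      linear_combination e1 + lam * e2
    exact (mul_eq_zero.1 h).resolve_left hl2'
  have hC10 : c 1 0 (1, 0) = 0 := by
    have h : (a 1 * b 0) * (c 1 0 (1, 0) - lam * c 0 1 (0, 1)) = 0 := by
      linear_combination p19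
    have h2 := (mul_eq_zero.1 h).resolve_left hC
    rw [hB01] at h2
    linear_combination h2
  have hB10 : c 0 1 (1, 0) = 0 := by
    have h : ((a 0 * b 1) * (a 1 * b 0)) * ((1 - lam * lam) * c 0 1 (1, 0)) = 0 := by
      linear_combination (a 0 * b 1) * p17 + lam * (a 0 * b 1) * p18
    exact (mul_eq_zero.1 ((mul_eq_zero.1 h).resolve_left
      (mul_ne_zero hB hC))).resolve_left hl2'
  have hC01 : c 1 0 (0, 1) = 0 := by
    have h : c 1 0 (0, 1) * (a 0 * b 1) = 0 := by
      rw [hB10] at p18; linear_combination p18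
    exact (mul_eq_zero.1 h).resolve_right hB
  have key : (a 0 * b 0) * (a 1 * b 1) = (a 0 * b 1) * (a 1 * b 0) := by ring
  have hC00 : c 1 0 (0, 0) = 0 := by
    by_contra hC0
    have hqd : q * (a 1 * b 1) = 1 := by
      have h : (1 - q * (a 1 * b 1)) * c 1 0 (0, 0) = 0 := by linear_combination p12
      have h2 := (mul_eq_zero.1 h).resolve_right hC0
      linear_combination -h2
    have hB0 : c 0 1 (0, 0) ≠ 0 := by
      intro h0
      apply hC0
      rw [h0] at p6'
      have h : (a 0 * b 1) * c 1 0 (0, 0) = 0 := by linear_combination p6'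
      exact (mul_eq_zero.1 h).resolve_left hB
    have hq : a 0 * b 0 = q := p1.resolve_right hB0
    have hbg : (a 0 * b 1) * (a 1 * b 0) = q * q := by
      have h : ((a 0 * b 1) * (a 1 * b 0) - q * q) * c 1 0 (0, 0) = 0 := by
        linear_combination (a 1 * b 0) * p6' - q * p8'
      have h2 := (mul_eq_zero.1 h).resolve_right hC0
      linear_combination h2
    apply hq2'
    linear_combination -hqd + key + hbg - (a 1 * b 1) * hq
  have hB00 : c 0 1 (0, 0) = 0 := by
    rw [hC00] at p6'
    have h : q * c 0 1 (0, 0) = 0 := by linear_combination p6'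
    exact (mul_eq_zero.1 h).resolve_left hq0
  have hC11 : c 1 0 (1, 1) = 0 := by
    by_contra hC0
    have hqd : q * (a 1 * b 1) = 1 := by
      have h : (1 - q * (a 1 * b 1)) * c 1 0 (1, 1) = 0 := by linear_combination p13
      have h2 := (mul_eq_zero.1 h).resolve_right hC0
      linear_combination -h2
    have hB0 : c 0 1 (1, 1) ≠ 0 := by
      intro h0
      apply hC0
      rw [h0] at p7'
      have h : (q * (a 0 * b 1)) * c 1 0 (1, 1) = 0 := by linear_combination p7'
      exact (mul_eq_zero.1 h).resolve_left (mul_ne_zero hq0 hB)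
    have hq : a 0 * b 0 = q := p2.resolve_right hB0
    have hbg : q * q * ((a 0 * b 1) * (a 1 * b 0)) = 1 := by
      have h : (q * q * ((a 0 * b 1) * (a 1 * b 0)) - 1) * c 1 0 (1, 1) = 0 := by
        linear_combination q * (a 1 * b 0) * p7' - p9'
      have h2 := (mul_eq_zero.1 h).resolve_right hC0
      linear_combination h2
    apply hq2'
    linear_combination -hbg + (q * q) * (-key + (a 1 * b 1) * hq + hqd)
  have hB11 : c 0 1 (1, 1) = 0 := by
    rw [hC11] at p7'
    linear_combination p7'
  have hA00' : c 0 0 0 = 0 := hA00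
  have hA11' : c 0 0 1 = 0 := hA11
  have hB00' : c 0 1 0 = 0 := hB00
  have hB11' : c 0 1 1 = 0 := hB11
  have hC00' : c 1 0 0 = 0 := hC00
  have hC11' : c 1 0 1 = 0 := hC11
  have hD00' : c 1 1 0 = 0 := hD00
  have hD11' : c 1 1 1 = 0 := hD11
  intro i j
  fin_cases i <;> fin_cases j <;>
    simp [hc', hA00, hA01, hA10, hA11, hB00, hB01, hB10, hB11, hC00, hC01, hC10, hC11,
      hD00, hD01, hD10, hD11, hA00', hA11', hB00', hB11', hC00', hC11', hD00', hD11']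

/-- Let `q ∈ kˣ` with `q ≠ ±1` and let `m ≥ 3`.  If the generalized Taft
algebra `T_n(λ,m,0)` acts on `O_q(M_2(k))` with `x` acting linearly and nonzero, and
with `g` acting as an element of the group `H ⋊ ⟨τ⟩` of graded automorphisms, then `g`
must act as an element of `H`, i.e. diagonally on the basis `(A,B,C,D)` of the
degree-one part of `O_q(M_2(k))`. -/
theorem stmt_10 {k : Type} [Field k] {q : k} (hq0 : q ≠ 0) (hq1 : q ≠ 1) (hq1' : q ≠ -1)
    {n m : ℕ} (hm3 : 3 ≤ m) (hmn : m ∣ n) {lam : k} (hlam : IsPrimitiveRoot lam m)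
    (T : TaftAction k n m lam 0 (QMat k q 2))
    (hg : ActsAsHTau k q 2 T.g)
    (hxlin : ∀ a ∈ QMat.V k q 2, T.x a ∈ QMat.V k q 2)
    (hx0 : T.x ≠ 0) :
    ∃ a b : Fin 2 → k, (∀ i, a i ≠ 0) ∧ (∀ j, b j ≠ 0) ∧
      ∀ i j, T.g (QMat.Y k q 2 i j) = (a i * b j) • QMat.Y k q 2 i j := by
  obtain ⟨a, b, ha, hb, hcase⟩ := hg
  rcases hcase with hdiag | htau
  · exact ⟨a, b, ha, hb, hdiag⟩
  · exfalso
    apply hx0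
    have hq2 : q ^ 2 ≠ 1 := by
      intro h
      have h2 : (q - 1) * (q + 1) = 0 := by linear_combination h
      rcases mul_eq_zero.1 h2 with h3 | h3
      · exact hq1 (by linear_combination h3)
      · exact hq1' (by linear_combination h3)
    have hl1 : lam ≠ 1 := by
      have := hlam.pow_ne_one_of_pos_of_lt (l := 1) one_ne_zero (by omega)
      simpa using this
    have hl2 : lam ^ 2 ≠ 1 :=
      hlam.pow_ne_one_of_pos_of_lt (l := 2) (by omega) (by omega)
    have hl2' : lam * lam ≠ 1 := by rw [← sq]; exact hl2
    have hxmem : ∀ i j : Fin 2, T.x (QMat.Y k q 2 i j) ∈ QMat.V k q 2 := by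
      intro i j
      exact hxlin _ (Submodule.subset_span ⟨(i, j), rfl⟩)
    have hzero : ∀ i j, T.x (QMat.Y k q 2 i j) = 0 :=
      tau_zero hq0 hq2 hl1 (by rw [sq]; exact hl2') T.g T.x T.comm T.skew a b ha hb htau hxmem
    have hx1 : T.x 1 = 0 := by
      have h := T.skew 1 1
      rw [mul_one, mul_one, map_one T.g, one_mul] at h
      exact (left_eq_add.mp h)
    apply LinearMap.ext
    intro u
    rw [LinearMap.zero_apply]
    obtain ⟨v, rfl⟩ := RingQuot.mkAlgHom_surjective k (QMatRel k q 2) u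
    refine FreeAlgebra.induction k (Fin 2 × Fin 2)
      (motive := fun w => T.x (RingQuot.mkAlgHom k (QMatRel k q 2) w) = 0) ?_ ?_ ?_ ?_ v
    · intro r
      rw [AlgHom.commutes, Algebra.algebraMap_eq_smul_one, map_smul, hx1, smul_zero]
    · intro p
      have h := hzero p.1 p.2
      simpa [QMat.Y, YY] using h
    · intro u v hu hv
      rw [map_mul, T.skew, hu, hv, mul_zero, zero_mul, add_zero]
    · intro u v hu hv
      rw [map_add, map_add, hu, hv, add_zero]
end

section
/- Let q ∈ k^× with q ≠ ±1, and let N ≥ 3 and m ≥ 3. If the generalized Taft algebra T_n(λ,m,0) acts on O_q(M_N(k)) with x acting linearly and nonzero, and with g acting as an element of H ⋊ ⟨τ⟩, then g must act as an element of H, i.e. diagonally on the basis (Y_{ij}) of the degree-one part of O_q(M_N(k)). -/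
namespace Stmt13Aux

open scoped BigOperators

variable {k : Type} [Field k]

/-- Sorted pair. -/
def sp {N : ℕ} (x y : Fin N) : Fin N × Fin N := if x ≤ y then (x, y) else (y, x)

lemma sp_eq_iff {N : ℕ} (a b c d : Fin N) :
    sp a b = sp c d ↔ (a = c ∧ b = d) ∨ (a = d ∧ b = c) := by
  unfold sp
  split_ifs with h1 h2 h2 <;>
    simp only [Prod.mk.injEq, Fin.ext_iff, Fin.le_def, not_le] at * <;> omega

lemma sp_comm {N : ℕ} (x y : Fin N) : sp x y = sp y x :=
  (sp_eq_iff x y y x).2 (Or.inr ⟨rfl, rfl⟩)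

lemma sp_self {N : ℕ} (x : Fin N) : sp x x = (x, x) := by simp [sp]

lemma sp_diag {N : ℕ} {x y z : Fin N} (h : sp x y = (z, z)) : x = z ∧ y = z := by
  rw [← sp_self z, sp_eq_iff] at h; tauto

lemma sp_cancel_right {N : ℕ} {u s i : Fin N} (h : sp u i = sp s i) : u = s := by
  rcases (sp_eq_iff u i s i).1 h with ⟨h1, _⟩ | ⟨h1, h2⟩
  · exact h1
  · exact h1.trans h2

lemma sp_cancel_left {N : ℕ} {u s i : Fin N} (h : sp i u = sp i s) : u = s := by
  rw [sp_comm i u, sp_comm i s] at h; exact sp_cancel_right h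

/-- `q`-commutation coefficient. -/
def co {N : ℕ} (q : k) (x y : Fin N) : k := if x < y then q else 1

lemma co_ne_zero {N : ℕ} {q : k} (hq0 : q ≠ 0) (x y : Fin N) : co q x y ≠ 0 := by
  unfold co; split_ifs
  · exact hq0
  · exact one_ne_zero

lemma co_self {N : ℕ} (q : k) (x : Fin N) : co q x x = 1 := by simp [co]

/-- The truncated module on which the quantum matrix algebra acts. -/
abbrev Am (k : Type) [Field k] (N : ℕ) : Type :=
  k × ((Fin N × Fin N) → k) × (((Fin N × Fin N) × (Fin N × Fin N)) → k)

def pt (k : Type) [Field k] (N : ℕ) : Am k N := (1, 0, 0)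

def pco {N : ℕ} (q : k) (i j : Fin N) (K : (Fin N × Fin N) × (Fin N × Fin N))
    (p : Fin N × Fin N) : k :=
  if K = (sp i p.1, sp j p.2) then co q i p.1 * co q j p.2 else 0

/-- projection to first coordinate. -/
def c1 (k : Type) [Field k] (N : ℕ) : Am k N →ₗ[k] k := LinearMap.fst k k _

/-- projection to second coordinate. -/
def c2 (k : Type) [Field k] (N : ℕ) : Am k N →ₗ[k] ((Fin N × Fin N) → k) :=
  (LinearMap.fst k _ _).comp (LinearMap.snd k k _)

noncomputable def Pop (q : k) {N : ℕ} (i j : Fin N) : Module.End k (Am k N) :=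
  LinearMap.prod 0 (LinearMap.prod
    (LinearMap.pi fun p => if p = (i, j) then c1 k N else 0)
    (LinearMap.pi fun K => ∑ p : Fin N × Fin N,
      pco q i j K p • ((LinearMap.proj p).comp (c2 k N))))

lemma Pop_apply (q : k) {N : ℕ} (i j : Fin N) (v : Am k N) :
    Pop q i j v = (0, fun p => if p = (i, j) then v.1 else 0,
      fun K => ∑ p : Fin N × Fin N, pco q i j K p * v.2.1 p) := by
  unfold Pop
  refine Prod.ext rfl (Prod.ext (funext fun p => ?_) (funext fun K => ?_))
  · simp only [LinearMap.prod_apply, Function.prod, LinearMap.pi_apply]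
    rw [apply_ite (fun f : Am k N →ₗ[k] k => f v)]
    simp [c1]
  · simp [LinearMap.prod_apply, Function.prod, LinearMap.pi_apply, LinearMap.sum_apply,
      LinearMap.smul_apply, smul_eq_mul, c2]

lemma Pop_comp (q : k) {N : ℕ} (a b u v : Fin N) (w : Am k N) :
    Pop q a b (Pop q u v w) = (0, 0, fun K => pco q a b K (u, v) * w.1) := by
  rw [Pop_apply, Pop_apply]
  refine Prod.ext rfl (Prod.ext (funext fun p => ?_) (funext fun K => ?_))
  · simp
  · simp only [mul_ite, mul_zero]
    rw [Finset.sum_ite_eq' Finset.univ (u, v)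
      (fun p => pco q a b K p * w.1)]
    simp

end Stmt13Aux

namespace Stmt13Aux

variable {k : Type} [Field k]

lemma smul_triple (c : k) {N : ℕ} (f : ((Fin N × Fin N) × (Fin N × Fin N)) → k) :
    c • ((0, 0, f) : Am k N) = (0, 0, c • f) := by
  simp [Prod.smul_def]

lemma Pop_row (q : k) {N : ℕ} (i : Fin N) {j m : Fin N} (h : j < m) :
    Pop q i j * Pop q i m = q • (Pop q i m * Pop q i j) := by
  apply LinearMap.ext; intro w
  rw [LinearMap.smul_apply, Module.End.mul_apply, Module.End.mul_apply, Pop_comp, Pop_comp,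
    smul_triple]
  refine Prod.ext rfl (Prod.ext rfl (funext fun K => ?_))
  simp only [Pi.smul_apply, smul_eq_mul, pco, sp_comm m j]
  split_ifs with h'
  · simp only [co, if_pos h, if_neg (asymm h), co_self]
    ring
  · ring

lemma Pop_col (q : k) {N : ℕ} (j : Fin N) {i l : Fin N} (h : i < l) :
    Pop q i j * Pop q l j = q • (Pop q l j * Pop q i j) := by
  apply LinearMap.ext; intro w
  rw [LinearMap.smul_apply, Module.End.mul_apply, Module.End.mul_apply, Pop_comp, Pop_comp,
    smul_triple]
  refine Prod.ext rfl (Prod.ext rfl (funext fun K => ?_))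
  simp only [Pi.smul_apply, smul_eq_mul, pco, sp_comm l i]
  split_ifs with h'
  · simp only [co, if_pos h, if_neg (asymm h), co_self]
    ring
  · ring

lemma Pop_anti (q : k) {N : ℕ} {i l j m : Fin N} (h1 : i < l) (h2 : m < j) :
    Pop q i j * Pop q l m = Pop q l m * Pop q i j := by
  apply LinearMap.ext; intro w
  rw [Module.End.mul_apply, Module.End.mul_apply, Pop_comp, Pop_comp]
  refine Prod.ext rfl (Prod.ext rfl (funext fun K => ?_))
  simp only [pco, sp_comm l i, sp_comm m j]
  split_ifs with h'
  · simp only [co, if_pos h1, if_neg (asymm h1), if_pos h2, if_neg (asymm h2)]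
    ring
  · rfl

lemma Pop_diag (q : k) (hq0 : q ≠ 0) {N : ℕ} {i l j m : Fin N} (h1 : i < l) (h2 : j < m) :
    Pop q i j * Pop q l m =
      Pop q l m * Pop q i j + (q - q⁻¹) • (Pop q i m * Pop q l j) := by
  apply LinearMap.ext; intro w
  rw [LinearMap.add_apply, LinearMap.smul_apply, Module.End.mul_apply, Module.End.mul_apply,
    Module.End.mul_apply, Pop_comp, Pop_comp, Pop_comp, smul_triple]
  have hmk : ((0, 0, fun K => pco q l m K (i, j) * w.1) : Am k N) +
      (0, 0, (q - q⁻¹) • fun K => pco q i m K (l, j) * w.1) =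
      (0, 0, (fun K => pco q l m K (i, j) * w.1) +
        (q - q⁻¹) • fun K => pco q i m K (l, j) * w.1) := by
    simp [Prod.mk_add_mk]
  rw [hmk]
  refine Prod.ext rfl (Prod.ext rfl (funext fun K => ?_))
  simp only [Pi.add_apply, Pi.smul_apply, smul_eq_mul, pco, sp_comm l i, sp_comm m j]
  split_ifs with h'
  · simp only [co, if_pos h1, if_neg (asymm h1), if_pos h2, if_neg (asymm h2)]
    field_simp
    ring
  · ring

noncomputable def psi (q : k) {N : ℕ} (hq0 : q ≠ 0) :
    QMat k q N →ₐ[k] Module.End k (Am k N) :=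
  RingQuot.liftAlgHom k ⟨FreeAlgebra.lift k (fun p : Fin N × Fin N => Pop q p.1 p.2), by
    intro u v h
    induction h with
    | row i h =>
        simp only [YY, map_mul, map_smul, FreeAlgebra.lift_ι_apply]
        exact Pop_row q i h
    | col j h =>
        simp only [YY, map_mul, map_smul, FreeAlgebra.lift_ι_apply]
        exact Pop_col q j h
    | anti h1 h2 =>
        simp only [YY, map_mul, FreeAlgebra.lift_ι_apply]
        exact Pop_anti q h1 h2
    | diag h1 h2 =>
        simp only [YY, map_mul, map_add, map_smul, FreeAlgebra.lift_ι_apply]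
        exact Pop_diag q hq0 h1 h2⟩

lemma psi_Y (q : k) {N : ℕ} (hq0 : q ≠ 0) (i j : Fin N) :
    psi q hq0 (QMat.Y k q N i j) = Pop q i j := by
  unfold psi QMat.Y YY
  rw [RingQuot.liftAlgHom_mkAlgHom_apply, FreeAlgebra.lift_ι_apply]

end Stmt13Aux

namespace Stmt13Aux

variable {k : Type} [Field k]

noncomputable def kap (q : k) {N : ℕ} (hq0 : q ≠ 0) (s t : Fin N) :
    QMat k q N →ₗ[k] k where
  toFun v := ((psi q hq0 v) (pt k N)).2.1 (s, t)
  map_add' u v := by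
    simp only [map_add, LinearMap.add_apply, Prod.snd_add, Prod.fst_add, Pi.add_apply]
  map_smul' c v := by
    simp only [map_smul, LinearMap.smul_apply, Prod.smul_snd, Prod.smul_fst, Pi.smul_apply,
      smul_eq_mul, RingHom.id_apply]

noncomputable def The (q : k) {N : ℕ} (hq0 : q ≠ 0)
    (K : (Fin N × Fin N) × (Fin N × Fin N)) : QMat k q N →ₗ[k] k where
  toFun v := ((psi q hq0 v) (pt k N)).2.2 K
  map_add' u v := by
    simp only [map_add, LinearMap.add_apply, Prod.snd_add, Pi.add_apply]
  map_smul' c v := by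
    simp only [map_smul, LinearMap.smul_apply, Prod.smul_snd, Pi.smul_apply,
      smul_eq_mul, RingHom.id_apply]

lemma kap_Y (q : k) {N : ℕ} (hq0 : q ≠ 0) (s t i j : Fin N) :
    kap q hq0 s t (QMat.Y k q N i j) = if ((s, t) : Fin N × Fin N) = (i, j) then 1 else 0 := by
  show ((psi q hq0 (QMat.Y k q N i j)) (pt k N)).2.1 (s, t) = _
  rw [psi_Y, Pop_apply]
  simp [pt]

lemma The_YY (q : k) {N : ℕ} (hq0 : q ≠ 0) (K : (Fin N × Fin N) × (Fin N × Fin N))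
    (a b u v : Fin N) :
    The q hq0 K (QMat.Y k q N a b * QMat.Y k q N u v) = pco q a b K (u, v) := by
  show ((psi q hq0 (QMat.Y k q N a b * QMat.Y k q N u v)) (pt k N)).2.2 K = _
  rw [map_mul, psi_Y, psi_Y, Module.End.mul_apply, Pop_comp]
  simp [pt]

lemma Y_mem_V (q : k) {N : ℕ} (i j : Fin N) : QMat.Y k q N i j ∈ QMat.V k q N :=
  Submodule.subset_span ⟨(i, j), rfl⟩

lemma expand_V (q : k) {N : ℕ} (hq0 : q ≠ 0) {v : QMat k q N} (hv : v ∈ QMat.V k q N) :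
    v = ∑ p : Fin N × Fin N, kap q hq0 p.1 p.2 v • QMat.Y k q N p.1 p.2 := by
  set L : QMat k q N →ₗ[k] QMat k q N :=
    (∑ p : Fin N × Fin N, (kap q hq0 p.1 p.2).smulRight (QMat.Y k q N p.1 p.2)) with hL
  have hgen : ∀ p : Fin N × Fin N, L (QMat.Y k q N p.1 p.2) = QMat.Y k q N p.1 p.2 := by
    intro p
    rw [hL, LinearMap.sum_apply]
    have : ∀ p' : Fin N × Fin N,
        ((kap q hq0 p'.1 p'.2).smulRight (QMat.Y k q N p'.1 p'.2)) (QMat.Y k q N p.1 p.2)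
        = if p' = p then QMat.Y k q N p'.1 p'.2 else 0 := by
      intro p'
      rw [LinearMap.smulRight_apply, kap_Y]
      by_cases h : p' = p
      · simp [h]
      · rw [if_neg, if_neg h, zero_smul]
        simpa using h
    rw [Finset.sum_congr rfl (fun p' _ => this p'), Finset.sum_ite_eq' Finset.univ p
      (fun p' => QMat.Y k q N p'.1 p'.2)]
    simp
  have hker : QMat.V k q N ≤ LinearMap.ker (L - LinearMap.id) := by
    rw [QMat.V, Submodule.span_le]
    rintro _ ⟨p, rfl⟩
    simp only [SetLike.mem_coe, LinearMap.mem_ker, LinearMap.sub_apply, LinearMap.id_apply,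
      sub_eq_zero]
    exact hgen p
  have h0 := hker hv
  simp only [LinearMap.mem_ker, LinearMap.sub_apply, LinearMap.id_apply, sub_eq_zero] at h0
  conv_lhs => rw [← h0]
  rw [hL, LinearMap.sum_apply]
  exact Finset.sum_congr rfl fun p _ => by rw [LinearMap.smulRight_apply]

lemma sum_pco_zero (q : k) {N : ℕ} (F : Fin N × Fin N → k) (a b : Fin N)
    {K : (Fin N × Fin N) × (Fin N × Fin N)}
    (hK : ∀ p : Fin N × Fin N, K ≠ (sp a p.1, sp b p.2)) :
    ∑ p : Fin N × Fin N, F p * pco q a b K p = 0 :=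
  Finset.sum_eq_zero fun p _ => by rw [pco, if_neg (hK p), mul_zero]

lemma sum_pco_single (q : k) {N : ℕ} (F : Fin N × Fin N → k) (a b : Fin N)
    {K : (Fin N × Fin N) × (Fin N × Fin N)} (p0 : Fin N × Fin N)
    (h0 : K = (sp a p0.1, sp b p0.2))
    (huniq : ∀ p : Fin N × Fin N, K = (sp a p.1, sp b p.2) → p = p0) :
    ∑ p : Fin N × Fin N, F p * pco q a b K p = F p0 * (co q a p0.1 * co q b p0.2) := by
  rw [Finset.sum_eq_single p0]
  · rw [pco, if_pos h0]
  · intro p _ hne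
    rw [pco, if_neg, mul_zero]
    exact fun hc => hne (huniq p hc)
  · exact fun h => absurd (Finset.mem_univ p0) h

lemma sum_pco'_zero (q : k) {N : ℕ} (F : Fin N × Fin N → k) (a b : Fin N)
    {K : (Fin N × Fin N) × (Fin N × Fin N)}
    (hK : ∀ p : Fin N × Fin N, K ≠ (sp p.1 a, sp p.2 b)) :
    ∑ p : Fin N × Fin N, F p * pco q p.1 p.2 K (a, b) = 0 :=
  Finset.sum_eq_zero fun p _ => by rw [pco, if_neg (hK p), mul_zero]

lemma sum_pco'_single (q : k) {N : ℕ} (F : Fin N × Fin N → k) (a b : Fin N)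
    {K : (Fin N × Fin N) × (Fin N × Fin N)} (p0 : Fin N × Fin N)
    (h0 : K = (sp p0.1 a, sp p0.2 b))
    (huniq : ∀ p : Fin N × Fin N, K = (sp p.1 a, sp p.2 b) → p = p0) :
    ∑ p : Fin N × Fin N, F p * pco q p.1 p.2 K (a, b)
      = F p0 * (co q p0.1 a * co q p0.2 b) := by
  rw [Finset.sum_eq_single p0]
  · rw [pco, if_pos h0]
  · intro p _ hne
    rw [pco, if_neg, mul_zero]
    exact fun hc => hne (huniq p hc)
  · exact fun h => absurd (Finset.mem_univ p0) h

end Stmt13Aux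

namespace Stmt13Aux

variable {k : Type} [Field k]

lemma exists_third {N : ℕ} (hN : 3 ≤ N) (i j : Fin N) : ∃ m : Fin N, m ≠ i ∧ m ≠ j := by
  by_contra h
  push_neg at h
  have hsub : (Finset.univ : Finset (Fin N)) ⊆ {i, j} := by
    intro z _
    rcases eq_or_ne z i with rfl | hz
    · simp
    · simp [h z hz]
  have hcard := Finset.card_le_card hsub
  rw [Finset.card_univ, Fintype.card_fin] at hcard
  have h2 : ({i, j} : Finset (Fin N)).card ≤ 2 :=
    (Finset.card_insert_le _ _).trans (by simp)
  omega

lemma cancel_factor {B c : k} (hc : c ≠ 0) (h : B * c = 0) : B = 0 := by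
  rcases mul_eq_zero.mp h with h' | h'
  · exact h'
  · exact absurd h' hc

lemma tau_x_eq_zero {q : k} (hq0 : q ≠ 0) {N : ℕ} (hN : 3 ≤ N)
    {lam : k} (hlam2 : lam ^ 2 ≠ 1)
    (g : QMat k q N ≃ₐ[k] QMat k q N) (x : Module.End k (QMat k q N))
    (hcomm : ∀ v : QMat k q N, g (x v) = lam • x (g v))
    (hskew : ∀ u v : QMat k q N, x (u * v) = g u * x v + x u * v)
    (a b : Fin N → k) (ha : ∀ i, a i ≠ 0) (hb : ∀ j, b j ≠ 0)
    (hgY : ∀ i j, g (QMat.Y k q N i j) = (a i * b j) • QMat.Y k q N j i)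
    (hxV : ∀ v ∈ QMat.V k q N, x v ∈ QMat.V k q N) :
    x = 0 := by
  have hexp : ∀ i j, x (QMat.Y k q N i j) =
      ∑ p : Fin N × Fin N, kap q hq0 p.1 p.2 (x (QMat.Y k q N i j)) • QMat.Y k q N p.1 p.2 :=
    fun i j => expand_V q hq0 (hxV _ (Y_mem_V q i j))
  have Yrow : ∀ (i : Fin N) {j m : Fin N}, j < m →
      QMat.Y k q N i j * QMat.Y k q N i m = q • (QMat.Y k q N i m * QMat.Y k q N i j) := by
    intro i j m h
    have h1 := RingQuot.mkAlgHom_rel k (QMatRel.row (k := k) (q := q) (N := N) i h)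
    simp only [map_mul, map_smul] at h1
    exact h1
  have Ycol : ∀ (j : Fin N) {i l : Fin N}, i < l →
      QMat.Y k q N i j * QMat.Y k q N l j = q • (QMat.Y k q N l j * QMat.Y k q N i j) := by
    intro j i l h
    have h1 := RingQuot.mkAlgHom_rel k (QMatRel.col (k := k) (q := q) (N := N) j h)
    simp only [map_mul, map_smul] at h1
    exact h1
  -- expansion of Θ against products
  have e1 : ∀ (K) (u1 u2 c d : Fin N),
      The q hq0 K (QMat.Y k q N u1 u2 * x (QMat.Y k q N c d)) =
        ∑ p : Fin N × Fin N, kap q hq0 p.1 p.2 (x (QMat.Y k q N c d)) * pco q u1 u2 K p := by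
    intro K u1 u2 c d
    conv_lhs => rw [hexp c d, Finset.mul_sum]
    rw [map_sum]
    refine Finset.sum_congr rfl fun p _ => ?_
    rw [mul_smul_comm, map_smul, smul_eq_mul, The_YY]
  have e2 : ∀ (K) (c d u1 u2 : Fin N),
      The q hq0 K (x (QMat.Y k q N c d) * QMat.Y k q N u1 u2) =
        ∑ p : Fin N × Fin N, kap q hq0 p.1 p.2 (x (QMat.Y k q N c d))
          * pco q p.1 p.2 K (u1, u2) := by
    intro K c d u1 u2
    conv_lhs => rw [hexp c d, Finset.sum_mul]
    rw [map_sum]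
    refine Finset.sum_congr rfl fun p _ => ?_
    rw [smul_mul_assoc, map_smul, smul_eq_mul, The_YY]
  -- master scalar identity from a q-commutation relation
  have hmaster : ∀ (i1 j1 i2 j2 : Fin N) (K : (Fin N × Fin N) × (Fin N × Fin N)),
      QMat.Y k q N i1 j1 * QMat.Y k q N i2 j2
        = q • (QMat.Y k q N i2 j2 * QMat.Y k q N i1 j1) →
      (a i1 * b j1) * (∑ p : Fin N × Fin N,
          kap q hq0 p.1 p.2 (x (QMat.Y k q N i2 j2)) * pco q j1 i1 K p)
        + (∑ p : Fin N × Fin N,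
          kap q hq0 p.1 p.2 (x (QMat.Y k q N i1 j1)) * pco q p.1 p.2 K (i2, j2))
      = q * ((a i2 * b j2) * (∑ p : Fin N × Fin N,
          kap q hq0 p.1 p.2 (x (QMat.Y k q N i1 j1)) * pco q j2 i2 K p)
        + (∑ p : Fin N × Fin N,
          kap q hq0 p.1 p.2 (x (QMat.Y k q N i2 j2)) * pco q p.1 p.2 K (i1, j1))) := by
    intro i1 j1 i2 j2 K hrel
    have hxid := congrArg (fun z => x z) hrel
    simp only [map_smul, hskew, hgY, smul_mul_assoc] at hxid
    have hth := congrArg (fun z => The q hq0 K z) hxid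
    simp only [map_add, map_smul, smul_eq_mul] at hth
    rw [e1 K j1 i1 i2 j2, e2 K i1 j1 i2 j2, e1 K j2 i2 i1 j1, e2 K i2 j2 i1 j1] at hth
    exact hth
  have cancel_q : ∀ {B c : k}, c ≠ 0 → (0 : k) = q * (B * c) → B = 0 := by
    intro B c hc h
    rcases mul_eq_zero.mp h.symm with h' | h'
    · exact absurd h' hq0
    · exact cancel_factor hc h'
  -- KILL R : coefficient of Y_{s,t} in x(Y_{i,j}) vanishes when t ∉ {i,j}
  have hkR : ∀ i j s t : Fin N, t ≠ i → t ≠ j →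
      kap q hq0 s t (x (QMat.Y k q N i j)) = 0 := by
    intro i j s t hti htj
    set K : (Fin N × Fin N) × (Fin N × Fin N) := (sp i s, (t, t)) with hK
    have hzero1 : ∀ (c d : Fin N) (w : Fin N),
        (∑ p : Fin N × Fin N, kap q hq0 p.1 p.2 (x (QMat.Y k q N c d)) * pco q w i K p)
          = 0 := by
      intro c d w
      refine sum_pco_zero q _ w i ?_
      intro p hc
      rw [hK] at hc
      injection hc with h1 h2
      exact hti ((sp_diag h2.symm).1).symm
    have hzero2 : ∀ (c d : Fin N) (w : Fin N), w ≠ t →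
        (∑ p : Fin N × Fin N,
          kap q hq0 p.1 p.2 (x (QMat.Y k q N c d)) * pco q p.1 p.2 K (i, w)) = 0 := by
      intro c d w hw
      refine sum_pco'_zero q _ i w ?_
      intro p hc
      rw [hK] at hc
      injection hc with h1 h2
      exact hw ((sp_diag h2.symm).2)
    have hone : ∀ (c d : Fin N),
        (∑ p : Fin N × Fin N,
          kap q hq0 p.1 p.2 (x (QMat.Y k q N c d)) * pco q p.1 p.2 K (i, t))
        = kap q hq0 s t (x (QMat.Y k q N c d)) * (co q s i * co q t t) := by
      intro c d
      refine sum_pco'_single q _ i t (s, t) ?_ ?_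
      · rw [hK, sp_comm s i, sp_self]
      · intro p hc
        rw [hK] at hc
        injection hc with h1 h2
        rw [sp_comm p.1 i] at h1
        exact Prod.ext (sp_cancel_left h1).symm (sp_diag h2.symm).1
    rcases lt_or_gt_of_ne (Ne.symm htj) with hjt | htj'
    · have hth := hmaster i j i t K (Yrow i hjt)
      rw [hzero1 i t j, hzero1 i j t, hone i j, hzero2 i t j (fun h => htj h.symm)] at hth
      simp only [co_self, mul_one, mul_zero, zero_add, add_zero] at hth
      exact cancel_factor (co_ne_zero hq0 s i) hth
    · have hth := hmaster i t i j K (Yrow i htj')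
      rw [hzero1 i j t, hzero1 i t j, hone i j, hzero2 i t j (fun h => htj h.symm)] at hth
      simp only [co_self, mul_one, mul_zero, zero_add, add_zero] at hth
      exact cancel_q (co_ne_zero hq0 s i) hth
  -- KILL C : coefficient of Y_{s,t} in x(Y_{i,j}) vanishes when s ∉ {i,j}
  have hkC : ∀ i j s t : Fin N, s ≠ i → s ≠ j →
      kap q hq0 s t (x (QMat.Y k q N i j)) = 0 := by
    intro i j s t hsi hsj
    set K : (Fin N × Fin N) × (Fin N × Fin N) := ((s, s), sp j t) with hK
    have hzero1 : ∀ (c d : Fin N) (w : Fin N),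
        (∑ p : Fin N × Fin N, kap q hq0 p.1 p.2 (x (QMat.Y k q N c d)) * pco q j w K p)
          = 0 := by
      intro c d w
      refine sum_pco_zero q _ j w ?_
      intro p hc
      rw [hK] at hc
      injection hc with h1 h2
      exact hsj ((sp_diag h1.symm).1).symm
    have hzero2 : ∀ (c d : Fin N) (w : Fin N), w ≠ s →
        (∑ p : Fin N × Fin N,
          kap q hq0 p.1 p.2 (x (QMat.Y k q N c d)) * pco q p.1 p.2 K (w, j)) = 0 := by
      intro c d w hw
      refine sum_pco'_zero q _ w j ?_
      intro p hc
      rw [hK] at hc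
      injection hc with h1 h2
      exact hw ((sp_diag h1.symm).2)
    have hone : ∀ (c d : Fin N),
        (∑ p : Fin N × Fin N,
          kap q hq0 p.1 p.2 (x (QMat.Y k q N c d)) * pco q p.1 p.2 K (s, j))
        = kap q hq0 s t (x (QMat.Y k q N c d)) * (co q s s * co q t j) := by
      intro c d
      refine sum_pco'_single q _ s j (s, t) ?_ ?_
      · rw [hK, sp_self, sp_comm t j]
      · intro p hc
        rw [hK] at hc
        injection hc with h1 h2
        rw [sp_comm p.2 j] at h2
        exact Prod.ext (sp_diag h1.symm).1 (sp_cancel_left h2).symm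
    rcases lt_or_gt_of_ne (Ne.symm hsi) with his | hsi'
    · have hth := hmaster i j s j K (Ycol j his)
      rw [hzero1 s j i, hzero1 i j s, hone i j, hzero2 s j i (fun h => hsi h.symm)] at hth
      simp only [co_self, one_mul, mul_zero, zero_add, add_zero] at hth
      exact cancel_factor (co_ne_zero hq0 t j) hth
    · have hth := hmaster s j i j K (Ycol j hsi')
      rw [hzero1 i j s, hzero1 s j i, hone i j, hzero2 s j i (fun h => hsi h.symm)] at hth
      simp only [co_self, one_mul, mul_zero, zero_add, add_zero] at hth
      exact cancel_q (co_ne_zero hq0 t j) hth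
  -- KILL D1 : coefficient of Y_{i,i} in x(Y_{i,j}) vanishes when j ≠ i
  have hkD1 : ∀ i j : Fin N, j ≠ i → kap q hq0 i i (x (QMat.Y k q N i j)) = 0 := by
    intro i j hji
    obtain ⟨m, hmi, hmj⟩ := exists_third hN i j
    set K : (Fin N × Fin N) × (Fin N × Fin N) := ((i, i), sp i m) with hK
    have hzero1 : ∀ (c d : Fin N) (w : Fin N), w ≠ i →
        (∑ p : Fin N × Fin N, kap q hq0 p.1 p.2 (x (QMat.Y k q N c d)) * pco q w i K p)
          = 0 := by
      intro c d w hw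
      refine sum_pco_zero q _ w i ?_
      intro p hc
      rw [hK] at hc
      injection hc with h1 h2
      exact hw ((sp_diag h1.symm).1)
    have hzero2 : ∀ (c d : Fin N),
        (∑ p : Fin N × Fin N,
          kap q hq0 p.1 p.2 (x (QMat.Y k q N c d)) * pco q p.1 p.2 K (i, j)) = 0 := by
      intro c d
      refine sum_pco'_zero q _ i j ?_
      intro p hc
      rw [hK] at hc
      injection hc with h1 h2
      rcases (sp_eq_iff i m p.2 j).1 h2 with ⟨_, hmj'⟩ | ⟨hij', _⟩
      · exact hmj hmj'
      · exact hji hij'.symm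
    have hone : ∀ (c d : Fin N),
        (∑ p : Fin N × Fin N,
          kap q hq0 p.1 p.2 (x (QMat.Y k q N c d)) * pco q p.1 p.2 K (i, m))
        = kap q hq0 i i (x (QMat.Y k q N c d)) * (co q i i * co q i m) := by
      intro c d
      refine sum_pco'_single q _ i m (i, i) ?_ ?_
      · rw [hK, sp_self]
      · intro p hc
        rw [hK] at hc
        injection hc with h1 h2
        exact Prod.ext (sp_diag h1.symm).1 (sp_cancel_right h2.symm)
    rcases lt_or_gt_of_ne (fun h => hmj h.symm) with hjm | hmj'
    · have hth := hmaster i j i m K (Yrow i hjm)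
      rw [hzero1 i m j hji, hzero1 i j m hmi, hone i j, hzero2 i m] at hth
      simp only [co_self, one_mul, mul_zero, zero_add, add_zero] at hth
      exact cancel_factor (co_ne_zero hq0 i m) hth
    · have hth := hmaster i m i j K (Yrow i hmj')
      rw [hzero1 i j m hmi, hzero1 i m j hji, hone i j, hzero2 i m] at hth
      simp only [co_self, one_mul, mul_zero, zero_add, add_zero] at hth
      exact cancel_q (co_ne_zero hq0 i m) hth
  -- KILL D2 : coefficient of Y_{j,j} in x(Y_{i,j}) vanishes when i ≠ j
  have hkD2 : ∀ i j : Fin N, i ≠ j → kap q hq0 j j (x (QMat.Y k q N i j)) = 0 := by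
    intro i j hij
    obtain ⟨l, hli, hlj⟩ := exists_third hN i j
    set K : (Fin N × Fin N) × (Fin N × Fin N) := (sp j l, (j, j)) with hK
    have hzero1 : ∀ (c d : Fin N) (w : Fin N), w ≠ j →
        (∑ p : Fin N × Fin N, kap q hq0 p.1 p.2 (x (QMat.Y k q N c d)) * pco q j w K p)
          = 0 := by
      intro c d w hw
      refine sum_pco_zero q _ j w ?_
      intro p hc
      rw [hK] at hc
      injection hc with h1 h2
      exact hw ((sp_diag h2.symm).1)
    have hzero2 : ∀ (c d : Fin N),
        (∑ p : Fin N × Fin N,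
          kap q hq0 p.1 p.2 (x (QMat.Y k q N c d)) * pco q p.1 p.2 K (i, j)) = 0 := by
      intro c d
      refine sum_pco'_zero q _ i j ?_
      intro p hc
      rw [hK] at hc
      injection hc with h1 h2
      rcases (sp_eq_iff j l p.1 i).1 h1 with ⟨_, hli'⟩ | ⟨hji', _⟩
      · exact hli hli'
      · exact hij hji'.symm
    have hone : ∀ (c d : Fin N),
        (∑ p : Fin N × Fin N,
          kap q hq0 p.1 p.2 (x (QMat.Y k q N c d)) * pco q p.1 p.2 K (l, j))
        = kap q hq0 j j (x (QMat.Y k q N c d)) * (co q j l * co q j j) := by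
      intro c d
      refine sum_pco'_single q _ l j (j, j) ?_ ?_
      · rw [hK, sp_self]
      · intro p hc
        rw [hK] at hc
        injection hc with h1 h2
        exact Prod.ext (sp_cancel_right h1.symm) (sp_diag h2.symm).1
    rcases lt_or_gt_of_ne (fun h => hli h.symm) with hil | hli'
    · have hth := hmaster i j l j K (Ycol j hil)
      rw [hzero1 l j i (fun h => hij h), hzero1 i j l hlj, hone i j, hzero2 l j] at hth
      simp only [co_self, mul_one, mul_zero, zero_add, add_zero] at hth
      exact cancel_factor (co_ne_zero hq0 j l) hth
    · have hth := hmaster l j i j K (Ycol j hli')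
      rw [hzero1 i j l hlj, hzero1 l j i (fun h => hij h), hone i j, hzero2 l j] at hth
      simp only [co_self, mul_one, mul_zero, zero_add, add_zero] at hth
      exact cancel_q (co_ne_zero hq0 j l) hth
  -- the λ-commutation ("star") relations
  have hstar : ∀ i j s t : Fin N,
      kap q hq0 t s (x (QMat.Y k q N i j)) * (a t * b s)
        = lam * ((a i * b j) * kap q hq0 s t (x (QMat.Y k q N j i))) := by
    intro i j s t
    have h1 := hcomm (QMat.Y k q N i j)
    rw [hgY i j, map_smul] at h1
    have hgx : g (x (QMat.Y k q N i j)) = ∑ p : Fin N × Fin N,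
        (kap q hq0 p.1 p.2 (x (QMat.Y k q N i j)) * (a p.1 * b p.2))
          • QMat.Y k q N p.2 p.1 := by
      conv_lhs => rw [hexp i j]
      rw [map_sum]
      refine Finset.sum_congr rfl fun p _ => ?_
      rw [map_smul, hgY, smul_smul]
    rw [hgx] at h1
    have h2 := congrArg (fun z => kap q hq0 s t z) h1
    simp only [map_sum, map_smul, smul_eq_mul] at h2
    have hsum : (∑ p : Fin N × Fin N,
        kap q hq0 p.1 p.2 (x (QMat.Y k q N i j)) * (a p.1 * b p.2)
          * kap q hq0 s t (QMat.Y k q N p.2 p.1))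
        = kap q hq0 t s (x (QMat.Y k q N i j)) * (a t * b s) := by
      rw [Finset.sum_eq_single ((t, s) : Fin N × Fin N)]
      · rw [kap_Y]
        simp
      · intro p _ hne
        rw [kap_Y, if_neg, mul_zero]
        intro hc
        injection hc with hc1 hc2
        exact hne (Prod.ext hc2.symm hc1.symm)
      · exact fun h => absurd (Finset.mem_univ _) h
    rw [hsum] at h2
    exact h2
  -- diagonal coefficients die
  have hbeta : ∀ i j : Fin N, kap q hq0 i j (x (QMat.Y k q N i j)) = 0 := by
    intro i j
    have h1 := hstar i j j i
    have h2 := hstar j i i j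
    have h3 : kap q hq0 i j (x (QMat.Y k q N i j)) * ((a i * b j) * (a j * b i))
        = lam ^ 2 * (kap q hq0 i j (x (QMat.Y k q N i j)) * ((a i * b j) * (a j * b i))) := by
      linear_combination (a j * b i) * h1 + lam * (a i * b j) * h2
    have h4 : (1 - lam ^ 2) *
        (kap q hq0 i j (x (QMat.Y k q N i j)) * ((a i * b j) * (a j * b i))) = 0 := by
      linear_combination h3
    rcases mul_eq_zero.mp h4 with h' | h'
    · exact absurd (by linear_combination -h' : lam ^ 2 = 1) hlam2
    · exact cancel_factor (mul_ne_zero (mul_ne_zero (ha i) (hb j))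
        (mul_ne_zero (ha j) (hb i))) h'
  have hgamma : ∀ i j : Fin N, kap q hq0 j i (x (QMat.Y k q N i j)) = 0 := by
    intro i j
    have h1 := hstar i j i j
    have h2 := hstar j i j i
    have h3 : kap q hq0 j i (x (QMat.Y k q N i j)) * ((a j * b i) * (a i * b j))
        = lam ^ 2 * (kap q hq0 j i (x (QMat.Y k q N i j)) * ((a j * b i) * (a i * b j))) := by
      linear_combination (a i * b j) * h1 + lam * (a i * b j) * h2
    have h4 : (1 - lam ^ 2) *
        (kap q hq0 j i (x (QMat.Y k q N i j)) * ((a j * b i) * (a i * b j))) = 0 := by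
      linear_combination h3
    rcases mul_eq_zero.mp h4 with h' | h'
    · exact absurd (by linear_combination -h' : lam ^ 2 = 1) hlam2
    · exact cancel_factor (mul_ne_zero (mul_ne_zero (ha j) (hb i))
        (mul_ne_zero (ha i) (hb j))) h'
  -- all coefficients vanish
  have hBall : ∀ i j s t : Fin N, kap q hq0 s t (x (QMat.Y k q N i j)) = 0 := by
    intro i j s t
    by_cases hti : t = i
    · by_cases hsi : s = i
      · rw [hti, hsi]
        rcases eq_or_ne j i with hji | hji
        · rw [hji]
          exact hbeta i i
        · exact hkD1 i j hji
      · by_cases hsj : s = j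
        · rw [hti, hsj]
          exact hgamma i j
        · exact hkC i j s t hsi hsj
    · by_cases htj : t = j
      · by_cases hsi : s = i
        · rw [htj, hsi]
          exact hbeta i j
        · by_cases hsj : s = j
          · rw [htj, hsj]
            exact hkD2 i j (fun h => hti (htj.trans h.symm))
          · exact hkC i j s t hsi hsj
      · exact hkR i j s t hti htj
  have hY0 : ∀ i j, x (QMat.Y k q N i j) = 0 := by
    intro i j
    rw [hexp i j]
    refine Finset.sum_eq_zero fun p _ => ?_
    rw [hBall, zero_smul]
  have hx1 : x 1 = 0 := by
    have h := hskew 1 1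
    rw [mul_one] at h
    rw [show g (1 : QMat k q N) = 1 from map_one g, one_mul, mul_one] at h
    have h2 : x 1 + x 1 = x 1 + 0 := by rw [add_zero]; exact h.symm
    exact add_left_cancel h2
  apply LinearMap.ext
  intro v
  obtain ⟨w, rfl⟩ := RingQuot.mkAlgHom_surjective k (QMatRel k q N) v
  rw [LinearMap.zero_apply]
  refine FreeAlgebra.induction k (Fin N × Fin N)
    (motive := fun w => x ((RingQuot.mkAlgHom k (QMatRel k q N)) w) = 0) ?_ ?_ ?_ ?_ w
  · intro r
    rw [AlgHom.commutes, Algebra.algebraMap_eq_smul_one, map_smul, hx1, smul_zero]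
  · intro p
    exact hY0 p.1 p.2
  · intro u v hu hv
    rw [map_mul, hskew, hu, hv, mul_zero, zero_mul, add_zero]
  · intro u v hu hv
    rw [map_add, map_add, hu, hv, add_zero]

end Stmt13Aux

/-- Let `q ∈ kˣ` with `q ≠ ±1`, and let `N ≥ 3` and `m ≥ 3`.  If the
generalized Taft algebra `T_n(λ,m,0)` acts on `O_q(M_N(k))` with `x` acting linearly and
nonzero, and with `g` acting as an element of `H ⋊ ⟨τ⟩`, then `g` must act as an element
of `H`, i.e. diagonally on the basis `(Y_{ij})` of the degree-one part of
`O_q(M_N(k))`. -/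
theorem stmt_13 {k : Type} [Field k] {q : k} (hq0 : q ≠ 0) (hq1 : q ≠ 1) (hq1' : q ≠ -1)
    {N : ℕ} (hN : 3 ≤ N)
    {n m : ℕ} (hm3 : 3 ≤ m) (hmn : m ∣ n) {lam : k} (hlam : IsPrimitiveRoot lam m)
    (T : TaftAction k n m lam 0 (QMat k q N))
    (hg : ActsAsHTau k q N T.g)
    (hxlin : ∀ a ∈ QMat.V k q N, T.x a ∈ QMat.V k q N)
    (hx0 : T.x ≠ 0) :
    ∃ a b : Fin N → k, (∀ i, a i ≠ 0) ∧ (∀ j, b j ≠ 0) ∧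
      ∀ i j, T.g (QMat.Y k q N i j) = (a i * b j) • QMat.Y k q N i j := by
  obtain ⟨a, b, ha, hb, hcase | hcase⟩ := hg
  · exact ⟨a, b, ha, hb, hcase⟩
  · exfalso
    have hlam2 : lam ^ 2 ≠ 1 := by
      intro h
      have hdvd := (hlam.pow_eq_one_iff_dvd 2).1 h
      have := Nat.le_of_dvd (by norm_num) hdvd
      omega
    exact hx0 (Stmt13Aux.tau_x_eq_zero hq0 hN hlam2 T.g T.x T.comm T.skew
      a b ha hb hcase hxlin)
end
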